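/- arXiv:2109.00404 — 2 statements merged into one kernel-verified Lean document; each statement's English description precedes it below -/
import Mathlib

section
/- In the model of Figure 2(b) with X_s = ε_s, X_v = −0.2·X_s + ε_v, X_w = −0.2·X_s + ε_w, X_t = −0.1·X_s − 0.2·X_v − 0.2·X_w + ε_t, where ε_s, ε_v, ε_w, ε_t are pairwise uncorrelated, mean-0, square-integrable, and Var(ε_s) = 1, one has cov(X_s, X_t) = −0.02, so that |cov(X_s, X_t)| = 0.02 < 0.2 = min of the absolute values of all edge coefficients on the directed paths s → v → t and s → w → t, even though the direct-edge coefficient β_ts = −0.1 is nonzero. Hence the transitive-reduction criterion (which removes the edge s → t whenever the minimum absolute edge coefficient along every alternative directed path exceeds |cov(X_s, X_t)|) incorrectly removes the true direct edge s → t. -/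
open MeasureTheory

/-- Mean (expectation) of a real random variable. -/
noncomputable def mean {Ω : Type*} [MeasurableSpace Ω] (μ : Measure Ω) (X : Ω → ℝ) : ℝ :=
  ∫ ω, X ω ∂μ

/-- Covariance `E[(X − E X)(Y − E Y)]`. -/
noncomputable def cov {Ω : Type*} [MeasurableSpace Ω] (μ : Measure Ω) (X Y : Ω → ℝ) : ℝ :=
  ∫ ω, (X ω - mean μ X) * (Y ω - mean μ Y) ∂μ

/-- Variance `Var X = cov(X, X)`. -/
noncomputable def Var {Ω : Type*} [MeasurableSpace Ω] (μ : Measure Ω) (X : Ω → ℝ) : ℝ :=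
  cov μ X X

/-- Standard deviation `sd X = sqrt (Var X)`. -/
noncomputable def sd {Ω : Type*} [MeasurableSpace Ω] (μ : Measure Ω) (X : Ω → ℝ) : ℝ :=
  Real.sqrt (Var μ X)

/-- Pearson correlation `cor(X,Y) = cov(X,Y)/(sd X · sd Y)`. -/
noncomputable def cor {Ω : Type*} [MeasurableSpace Ω] (μ : Measure Ω) (X Y : Ω → ℝ) : ℝ :=
  cov μ X Y / (sd μ X * sd μ Y)

theorem stmt_8 {Ω : Type*} [MeasurableSpace Ω] (μ : Measure Ω) [IsProbabilityMeasure μ]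
    (εs εv εw εt Xs Xv Xw Xt : Ω → ℝ)
    (hεs2 : MemLp εs 2 μ) (hεv2 : MemLp εv 2 μ) (hεw2 : MemLp εw 2 μ)
    (hεt2 : MemLp εt 2 μ)
    (hms : mean μ εs = 0) (hmv : mean μ εv = 0) (hmw : mean μ εw = 0)
    (hmt : mean μ εt = 0)
    (hvs : Var μ εs = 1)
    (hsv : cov μ εs εv = 0) (hsw : cov μ εs εw = 0) (hst : cov μ εs εt = 0)
    (hvw : cov μ εv εw = 0) (hvt : cov μ εv εt = 0) (hwt : cov μ εw εt = 0)
    (hXs : Xs = εs)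
    (hXv : Xv = fun ω => -0.2 * Xs ω + εv ω)
    (hXw : Xw = fun ω => -0.2 * Xs ω + εw ω)
    (hXt : Xt = fun ω => -0.1 * Xs ω + -0.2 * Xv ω + -0.2 * Xw ω + εt ω) :
    cov μ Xs Xt = -0.02 ∧
    |cov μ Xs Xt| = 0.02 ∧
    -- the minimum of the absolute values of the edge coefficients on the two
    -- directed paths s → v → t and s → w → t is 0.2, and it exceeds |cov(Xs, Xt)|,
    -- so criterion (10) removes the edge s → t even though β_ts = −0.1 ≠ 0
    |cov μ Xs Xt| < min (min |(-0.2 : ℝ)| |(-0.2 : ℝ)|) (min |(-0.2 : ℝ)| |(-0.2 : ℝ)|) ∧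
    (-0.1 : ℝ) ≠ 0 := by
  subst hXv hXw hXt
  simp only [hXs]
  -- integrability facts
  have ies : Integrable εs μ := hεs2.integrable one_le_two
  have iev : Integrable εv μ := hεv2.integrable one_le_two
  have iew : Integrable εw μ := hεw2.integrable one_le_two
  have iet : Integrable εt μ := hεt2.integrable one_le_two
  have hmul : ∀ f g : Ω → ℝ, MemLp f 2 μ → MemLp g 2 μ →
      Integrable (fun ω => f ω * g ω) μ := by
    intro f g hf hg
    have h := (hf.smul hg (r := 1)).integrable le_rfl
    simpa [smul_eq_mul, mul_comm, Pi.mul_def] using h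
  have iss : Integrable (fun ω => εs ω * εs ω) μ := hmul _ _ hεs2 hεs2
  have isv : Integrable (fun ω => εs ω * εv ω) μ := hmul _ _ hεs2 hεv2
  have isw : Integrable (fun ω => εs ω * εw ω) μ := hmul _ _ hεs2 hεw2
  have ist : Integrable (fun ω => εs ω * εt ω) μ := hmul _ _ hεs2 hεt2
  -- raw second-moment integrals from the cov/Var hypotheses
  have hIss : ∫ ω, εs ω * εs ω ∂μ = 1 := by
    have := hvs
    simpa [Var, cov, hms, sub_zero] using this
  have hIsv : ∫ ω, εs ω * εv ω ∂μ = 0 := by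
    simpa [cov, hms, hmv, sub_zero] using hsv
  have hIsw : ∫ ω, εs ω * εw ω ∂μ = 0 := by
    simpa [cov, hms, hmw, sub_zero] using hsw
  have hIst : ∫ ω, εs ω * εt ω ∂μ = 0 := by
    simpa [cov, hms, hmt, sub_zero] using hst
  -- mean of Xt
  have hmeanXt :
      mean μ (fun ω => -0.1 * εs ω + -0.2 * (-0.2 * εs ω + εv ω) +
        -0.2 * (-0.2 * εs ω + εw ω) + εt ω) = 0 := by
    have hfun : (fun ω => -0.1 * εs ω + -0.2 * (-0.2 * εs ω + εv ω) +
        -0.2 * (-0.2 * εs ω + εw ω) + εt ω)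
        = fun ω => (-0.02 : ℝ) * εs ω + ((-0.2 : ℝ) * εv ω +
          ((-0.2 : ℝ) * εw ω + εt ω)) := by
      funext ω; ring
    rw [mean, hfun]
    have i1 : Integrable (fun ω => (-0.2:ℝ) * εw ω + εt ω) μ := (iew.const_mul _).add iet
    have i2 : Integrable (fun ω => (-0.2:ℝ) * εv ω + ((-0.2:ℝ) * εw ω + εt ω)) μ :=
      (iev.const_mul _).add i1
    rw [integral_add (ies.const_mul _) i2,
      integral_add (iev.const_mul _) i1,
      integral_add (iew.const_mul _) iet,
      integral_const_mul, integral_const_mul, integral_const_mul]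
    have h1 : ∫ ω, εs ω ∂μ = 0 := hms
    have h2 : ∫ ω, εv ω ∂μ = 0 := hmv
    have h3 : ∫ ω, εw ω ∂μ = 0 := hmw
    have h4 : ∫ ω, εt ω ∂μ = 0 := hmt
    rw [h1, h2, h3, h4]; ring
  -- the covariance
  have hcov : cov μ εs (fun ω => -0.1 * εs ω + -0.2 * (-0.2 * εs ω + εv ω) +
      -0.2 * (-0.2 * εs ω + εw ω) + εt ω) = -0.02 := by
    rw [cov, hms, hmeanXt]
    have hfun : (fun ω => (εs ω - 0) * ((-0.1 * εs ω + -0.2 * (-0.2 * εs ω + εv ω) +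
        -0.2 * (-0.2 * εs ω + εw ω) + εt ω) - 0))
        = fun ω => (-0.02 : ℝ) * (εs ω * εs ω) + ((-0.2 : ℝ) * (εs ω * εv ω) +
          ((-0.2 : ℝ) * (εs ω * εw ω) + εs ω * εt ω)) := by
      funext ω; ring
    rw [hfun]
    have j1 : Integrable (fun ω => (-0.2:ℝ) * (εs ω * εw ω) + εs ω * εt ω) μ :=
      (isw.const_mul _).add ist
    have j2 : Integrable (fun ω => (-0.2:ℝ) * (εs ω * εv ω) +
        ((-0.2:ℝ) * (εs ω * εw ω) + εs ω * εt ω)) μ := (isv.const_mul _).add j1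
    rw [integral_add (iss.const_mul _) j2,
      integral_add (isv.const_mul _) j1,
      integral_add (isw.const_mul _) ist,
      integral_const_mul, integral_const_mul, integral_const_mul,
      hIss, hIsv, hIsw, hIst]
    ring
  have habs : |(-0.02:ℝ)| = 0.02 := by rw [abs_of_nonpos] <;> norm_num
  have habs2 : |(-0.2:ℝ)| = 0.2 := by rw [abs_of_nonpos] <;> norm_num
  refine ⟨hcov, ?_, ?_, by norm_num⟩
  · rw [hcov]; exact habs
  · rw [hcov, habs, habs2]; norm_num
end

section
/- Let X_1, …, X_k (k ≥ 3) be square-integrable real random variables forming a standardized chain: each X_j has mean 0 and variance 1, and X_{j+1} = ρ_j·X_j + ε_{j+1} for real ρ_j, where each ε_{j+1} has mean 0 and is uncorrelated with X_1, …, X_j. Then cor(X_1, X_k) = ρ_1·ρ_2·⋯·ρ_{k−1}. Moreover, if 0 < |ρ_j| < 1 for every j, then |ρ_j| > |cor(X_1, X_k)| for every j; that is, the transitive-reduction criterion min_j |ρ_j| > |cor(X_1, X_k)| necessarily holds whenever the correlation between the endpoints is induced purely by the directed chain. -/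
open MeasureTheory

lemma memL2_integrable_mul {Ω : Type*} [MeasurableSpace Ω] {μ : Measure Ω} {f g : Ω → ℝ}
    (hf : MemLp f 2 μ) (hg : MemLp g 2 μ) : Integrable (fun ω => f ω * g ω) μ := by
  have : MemLp (f • g) 1 μ := haveI : ENNReal.HolderTriple 2 2 1 := ⟨by rw [inv_one, ENNReal.inv_two_add_inv_two]⟩; hg.smul hf
  rw [memLp_one_iff_integrable] at this
  exact this

lemma cov_eq_integral_mul {Ω : Type*} [MeasurableSpace Ω] {μ : Measure Ω} {f g : Ω → ℝ}
    (hf : mean μ f = 0) (hg : mean μ g = 0) :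
    cov μ f g = ∫ ω, f ω * g ω ∂μ := by
  simp [cov, hf, hg]

theorem stmt_9 {Ω : Type*} [MeasurableSpace Ω] (μ : Measure Ω) [IsProbabilityMeasure μ]
    (k : ℕ) (hk : 3 ≤ k) (X ε : ℕ → Ω → ℝ) (ρ : ℕ → ℝ)
    (hX2 : ∀ j < k, MemLp (X j) 2 μ) (hε2 : ∀ j < k, MemLp (ε j) 2 μ)
    (hXmean : ∀ j < k, mean μ (X j) = 0) (hXvar : ∀ j < k, Var μ (X j) = 1)
    (hchain : ∀ j, j + 1 < k → X (j + 1) = fun ω => ρ j * X j ω + ε (j + 1) ω)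
    (hεmean : ∀ j, j + 1 < k → mean μ (ε (j + 1)) = 0)
    (hεunc : ∀ j, j + 1 < k → ∀ i ≤ j, cov μ (ε (j + 1)) (X i) = 0) :
    cor μ (X 0) (X (k - 1)) = ∏ j ∈ Finset.range (k - 1), ρ j ∧
    ((∀ j < k - 1, 0 < |ρ j| ∧ |ρ j| < 1) →
      ∀ j < k - 1, |cor μ (X 0) (X (k - 1))| < |ρ j|) := by
  have h0k : 0 < k := by omega
  -- covariance of X 0 with X j equals product of ρ's
  have key : ∀ j, j < k → cov μ (X 0) (X j) = ∏ i ∈ Finset.range j, ρ i := by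
    intro j
    induction j with
    | zero =>
      intro _
      simpa [Finset.prod_range_zero, Var] using hXvar 0 h0k
    | succ j ih =>
      intro hj1
      have hj : j < k := by omega
      have hXj2 := hX2 j hj
      have hX02 := hX2 0 h0k
      have hεj2 := hε2 (j + 1) hj1
      have hm0 := hXmean 0 h0k
      have hmj := hXmean j hj
      have hmε := hεmean j hj1
      have hc := hchain j hj1
      have hεX0 : ∫ ω, X 0 ω * ε (j + 1) ω ∂μ = 0 := by
        have := hεunc j hj1 0 (Nat.zero_le j)
        rw [cov_eq_integral_mul hmε hm0] at this
        rw [← this]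
        congr 1; ext ω; ring
      have hint1 : Integrable (fun ω => ρ j * (X 0 ω * X j ω)) μ :=
        (memL2_integrable_mul hX02 hXj2).const_mul (ρ j)
      have hint2 : Integrable (fun ω => X 0 ω * ε (j + 1) ω) μ :=
        memL2_integrable_mul hX02 hεj2
      have hmj1 : mean μ (X (j + 1)) = 0 := hXmean (j + 1) hj1
      rw [cov_eq_integral_mul hm0 hmj1, hc]
      have : (fun ω => X 0 ω * (ρ j * X j ω + ε (j + 1) ω))
          = fun ω => ρ j * (X 0 ω * X j ω) + X 0 ω * ε (j + 1) ω := by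
        ext ω; ring
      rw [this, integral_add hint1 hint2, hεX0, add_zero,
        integral_const_mul, Finset.prod_range_succ]
      have := ih hj
      rw [cov_eq_integral_mul hm0 hmj] at this
      rw [this]; ring
  have hk1 : k - 1 < k := by omega
  have hsd0 : sd μ (X 0) = 1 := by simp [sd, hXvar 0 h0k]
  have hsdk : sd μ (X (k - 1)) = 1 := by simp [sd, hXvar (k - 1) hk1]
  have hcor : cor μ (X 0) (X (k - 1)) = ∏ j ∈ Finset.range (k - 1), ρ j := by
    rw [cor, hsd0, hsdk, mul_one, div_one, key (k - 1) hk1]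
  refine ⟨hcor, fun hρ j hj => ?_⟩
  rw [hcor, Finset.abs_prod]
  have hjmem : j ∈ Finset.range (k - 1) := Finset.mem_range.mpr hj
  rw [← Finset.prod_erase_mul _ _ hjmem]
  have hne : ((Finset.range (k - 1)).erase j).Nonempty := by
    have hcard : 2 ≤ (Finset.range (k - 1)).card := by
      rw [Finset.card_range]; omega
    rw [← Finset.card_pos, Finset.card_erase_of_mem hjmem]
    omega
  obtain ⟨i, hi⟩ := hne
  have hisub : i ∈ Finset.range (k - 1) := Finset.mem_erase.mp hi |>.2
  have hprod_lt : ∏ l ∈ (Finset.range (k - 1)).erase j, |ρ l| < 1 := by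
    rw [← Finset.prod_erase_mul _ _ hi]
    have hle : ∏ l ∈ ((Finset.range (k - 1)).erase j).erase i, |ρ l| ≤ 1 :=
      Finset.prod_le_one (fun l _ => abs_nonneg _)
        (fun l hl => le_of_lt (hρ l (Finset.mem_range.mp
          ((Finset.mem_erase.mp (Finset.mem_erase.mp hl).2).2))).2)
    calc (∏ l ∈ ((Finset.range (k - 1)).erase j).erase i, |ρ l|) * |ρ i|
        ≤ 1 * |ρ i| := by
          apply mul_le_mul_of_nonneg_right hle (abs_nonneg _)
      _ = |ρ i| := one_mul _
      _ < 1 := (hρ i (Finset.mem_range.mp hisub)).2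
  calc (∏ l ∈ (Finset.range (k - 1)).erase j, |ρ l|) * |ρ j|
      < 1 * |ρ j| :=
        mul_lt_mul_of_pos_right hprod_lt (hρ j hj).1
    _ = |ρ j| := one_mul _
end
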